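/- Let C1 be a t-dimensional linear subspace of F_2^n and let l ≥ 0 be an integer with t + l ≤ n. Let μ be a probability distribution on the set of (t+l)-dimensional linear subspaces C2 of F_2^n containing C1 such that for every x ∈ F_2^n \ C1 the μ-probability of the event {C2 : x ∈ C2} equals (2^{l+t} − 2^t)/(2^n − 2^t). For each subspace C2 in the support of μ let Γ_{C2} ⊆ F_2^n be a set containing, for each coset of C2 in F_2^n, exactly one element of minimal Hamming weight in that coset, and set Γ_{C2} + C1 := {γ + c : γ ∈ Γ_{C2}, c ∈ C1}. Then for every probability distribution P on F_2^n, E_{C2∼μ}[1 − P(Γ_{C2} + C1)] ≤ Σ_{k=0}^{n} P̃(k)·g(2^{l+t−n}|n,k), where P̃(k) := P({x ∈ F_2^n : |x| = k}) and g(x|n,k) := min{2^{n·h̄(k/n)}·x, 1} if k ≤ ⌊n/2⌋ and g(x|n,k) := 1 if k > ⌊n/2⌋. -/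

import Mathlib

open scoped Classical

/-- Binary entropy with base-2 logarithm, with the convention `0 * log 0 = 0`. -/
noncomputable def h2 (x : ℝ) : ℝ := -(x * Real.logb 2 x) - (1 - x) * Real.logb 2 (1 - x)

/-- `h̄(x) = h(x)` for `x < 1/2` and `h̄(x) = 1` for `x ≥ 1/2`. -/
noncomputable def hbar (x : ℝ) : ℝ := if x < 1 / 2 then h2 x else 1

/-- `g(x|n,k) = min{2^{n·h̄(k/n)}·x, 1}` if `k ≤ ⌊n/2⌋`, and `g(x|n,k) = 1` otherwise. -/
noncomputable def g (x : ℝ) (n k : ℕ) : ℝ :=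
  if k ≤ n / 2 then min (2 ^ ((n : ℝ) * hbar ((k : ℝ) / n)) * x) 1 else 1

lemma zmod2_ext : ∀ c d : ZMod 2, (c ≠ 0 ↔ d ≠ 0) → c = d := by decide

lemma weight_card_le (n j : ℕ) :
    (Finset.univ.filter (fun x : Fin n → ZMod 2 => hammingNorm x = j)).card ≤ n.choose j := by
  have h := Finset.card_le_card_of_injOn
    (s := Finset.univ.filter (fun x : Fin n → ZMod 2 => hammingNorm x = j))
    (t := Finset.powersetCard j (Finset.univ : Finset (Fin n)))
    (fun x : Fin n → ZMod 2 => Finset.univ.filter (fun i => x i ≠ 0))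
    (by
      intro a ha
      rw [Finset.mem_coe] at ha
      rw [Finset.mem_coe, Finset.mem_powersetCard]
      refine ⟨Finset.filter_subset _ _, ?_⟩
      simpa [hammingNorm] using (Finset.mem_filter.1 ha).2)
    (by
      intro a _ b _ hab
      funext i
      simp only [Finset.ext_iff, Finset.mem_filter, Finset.mem_univ, true_and] at hab
      exact zmod2_ext _ _ (hab i))
  simpa [Finset.card_powersetCard] using h

lemma ball_card_le_sum (n k : ℕ) :
    ((Finset.univ.filter (fun x : Fin n → ZMod 2 => hammingNorm x ≤ k)).card : ℝ)
      ≤ ∑ j ∈ Finset.range (k + 1), (n.choose j : ℝ) := by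
  have h := Finset.card_eq_sum_card_fiberwise
    (f := fun x : Fin n → ZMod 2 => hammingNorm x)
    (s := Finset.univ.filter (fun x : Fin n → ZMod 2 => hammingNorm x ≤ k))
    (t := Finset.range (k + 1))
    (by intro x hx; simp only [Finset.mem_coe, Finset.mem_filter] at hx; simp [Nat.lt_succ_iff, hx.2])
  rw [h]
  push_cast
  apply Finset.sum_le_sum
  intro j _
  have hsub : ((Finset.univ.filter (fun x : Fin n → ZMod 2 => hammingNorm x ≤ k)).filter
      (fun x => hammingNorm x = j)) ⊆ Finset.univ.filter (fun x : Fin n → ZMod 2 => hammingNorm x = j) := by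
    intro x hx
    simp only [Finset.mem_filter] at hx ⊢
    exact ⟨Finset.mem_univ _, hx.2⟩
  exact_mod_cast le_trans (Nat.cast_le.2 (Finset.card_le_card hsub)) (Nat.cast_le.2 (weight_card_le n j))

lemma rpow_mul_logb {x : ℝ} (hx : 0 < x) (m : ℕ) :
    (2:ℝ) ^ ((m : ℝ) * Real.logb 2 x) = x ^ m := by
  rw [mul_comm, Real.rpow_mul (by norm_num), Real.rpow_logb (by norm_num) (by norm_num) hx,
    Real.rpow_natCast]

lemma sum_choose_le_exp (n k : ℕ) (hk : 2 * k < n) :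
    ∑ j ∈ Finset.range (k + 1), (n.choose j : ℝ)
      ≤ 2 ^ ((n : ℝ) * h2 ((k : ℝ) / n)) := by
  rcases Nat.eq_zero_or_pos k with hk0 | hk0
  · subst hk0
    simp [h2, Real.rpow_zero]
  have hn : 0 < n := by omega
  set p : ℝ := (k : ℝ) / n with hp_def
  have hnR : (0:ℝ) < n := by exact_mod_cast hn
  have hkR : 2 * (k:ℝ) < n := by exact_mod_cast hk
  have hp : 0 < p := div_pos (by exact_mod_cast hk0) hnR
  have hplt : p < 1/2 := by
    rw [hp_def, div_lt_div_iff₀ hnR (by norm_num)]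
    linarith
  have hq : 0 < 1 - p := by linarith
  have hpq : p ≤ 1 - p := by linarith
  have hnp : (n : ℝ) * p = k := by rw [hp_def]; field_simp [hnR.ne']
  have hkn : k ≤ n := by omega
  have hnq : (n : ℝ) * (1 - p) = ((n - k : ℕ) : ℝ) := by
    push_cast [hkn]; rw [mul_sub, hnp]; ring
  have hval : (2:ℝ) ^ ((n : ℝ) * h2 p) = (p ^ k * (1 - p) ^ (n - k))⁻¹ := by
    have h1 : (n : ℝ) * h2 p
        = -(((k:ℕ) : ℝ) * Real.logb 2 p + ((n - k : ℕ) : ℝ) * Real.logb 2 (1 - p)) := by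
      rw [h2]; rw [← hnp, ← hnq]; ring
    rw [h1, Real.rpow_neg (by norm_num), Real.rpow_add (by norm_num),
      rpow_mul_logb hp, rpow_mul_logb hq]
  have hterm : ∀ j ∈ Finset.range (k + 1),
      (n.choose j : ℝ) * (p ^ k * (1 - p) ^ (n - k))
        ≤ (n.choose j : ℝ) * (p ^ j * (1 - p) ^ (n - j)) := by
    intro j hj
    have hjk : j ≤ k := Nat.lt_succ_iff.1 (Finset.mem_range.1 hj)
    have key : p ^ k * (1 - p) ^ (n - k) ≤ p ^ j * (1 - p) ^ (n - j) := by
      have e1 : p ^ k = p ^ j * p ^ (k - j) := by rw [← pow_add]; congr 1; omega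
      have e2 : (1 - p) ^ (n - j) = (1 - p) ^ (k - j) * (1 - p) ^ (n - k) := by
        rw [← pow_add]; congr 1; omega
      rw [e1, e2]
      have hle : p ^ (k - j) ≤ (1 - p) ^ (k - j) := pow_le_pow_left₀ hp.le hpq _
      calc p ^ j * p ^ (k - j) * (1 - p) ^ (n - k)
          ≤ p ^ j * (1 - p) ^ (k - j) * (1 - p) ^ (n - k) := by
            apply mul_le_mul_of_nonneg_right _ (by positivity)
            exact mul_le_mul_of_nonneg_left hle (by positivity)
        _ = p ^ j * ((1 - p) ^ (k - j) * (1 - p) ^ (n - k)) := by ring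
    exact mul_le_mul_of_nonneg_left key (by positivity)
  have hsum1 : ∑ j ∈ Finset.range (k + 1), (n.choose j : ℝ) * (p ^ j * (1 - p) ^ (n - j)) ≤ 1 := by
    have hext : ∑ j ∈ Finset.range (k + 1), (n.choose j : ℝ) * (p ^ j * (1 - p) ^ (n - j))
        ≤ ∑ j ∈ Finset.range (n + 1), (n.choose j : ℝ) * (p ^ j * (1 - p) ^ (n - j)) := by
      apply Finset.sum_le_sum_of_subset_of_nonneg
      · exact Finset.range_subset_range.2 (by omega)
      · intro j _ _; positivity
    have hbin : ∑ j ∈ Finset.range (n + 1), (n.choose j : ℝ) * (p ^ j * (1 - p) ^ (n - j))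
        = (p + (1 - p)) ^ n := by
      rw [add_pow]
      apply Finset.sum_congr rfl
      intro j _; ring
    rw [hbin] at hext
    simpa using hext
  have hm : 0 < p ^ k * (1 - p) ^ (n - k) := by positivity
  rw [hval, inv_eq_one_div, le_div_iff₀ hm]
  calc (∑ j ∈ Finset.range (k + 1), (n.choose j : ℝ)) * (p ^ k * (1 - p) ^ (n - k))
      = ∑ j ∈ Finset.range (k + 1), (n.choose j : ℝ) * (p ^ k * (1 - p) ^ (n - k)) :=
        Finset.sum_mul ..
    _ ≤ ∑ j ∈ Finset.range (k + 1), (n.choose j : ℝ) * (p ^ j * (1 - p) ^ (n - j)) :=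
        Finset.sum_le_sum hterm
    _ ≤ 1 := hsum1

lemma q_le_X (n t l : ℕ) (htl : t + l ≤ n) :
    ((2:ℝ) ^ (l + t) - 2 ^ t) / (2 ^ n - 2 ^ t) ≤ (2:ℝ) ^ (l + t) / 2 ^ n := by
  by_cases ht : t = n
  · have hl : l = 0 := by omega
    subst ht; subst hl
    simp
  · have htn : t < n := by omega
    have h1 : (2:ℝ) ^ t < 2 ^ n := by
      apply pow_lt_pow_right₀ (by norm_num) htn
    have h2 : (2:ℝ) ^ (l + t) ≤ 2 ^ n := by
      apply pow_le_pow_right₀ (by norm_num) (by omega)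
    have h3 : (0:ℝ) < 2 ^ t := by positivity
    rw [div_le_div_iff₀ (by linarith) (by positivity)]
    nlinarith [mul_le_mul_of_nonneg_right h2 h3.le]

lemma translate_ball_card (n k : ℕ) (y : Fin n → ZMod 2) :
    (Finset.univ.filter (fun x : Fin n → ZMod 2 => hammingNorm (y - x) ≤ k)).card
      = (Finset.univ.filter (fun x : Fin n → ZMod 2 => hammingNorm x ≤ k)).card := by
  apply Finset.card_bij' (fun x _ => y - x) (fun x _ => y - x)
  · intro a ha
    simp only [Finset.mem_filter, Finset.mem_univ, true_and] at ha ⊢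
    first | exact ha | rwa [sub_sub_cancel]
  · intro a ha
    simp only [Finset.mem_filter, Finset.mem_univ, true_and] at ha ⊢
    first | exact ha | rwa [sub_sub_cancel]
  · intro a _; rw [sub_sub_cancel]
  · intro a _; rw [sub_sub_cancel]

lemma pointwise_bound (n t l : ℕ) (htl : t + l ≤ n)
    (C1 : Submodule (ZMod 2) (Fin n → ZMod 2))
    (Ω : Type) [Fintype Ω] (μ : Ω → ℝ)
    (hμ0 : ∀ ω, 0 ≤ μ ω) (hμ1 : ∑ ω, μ ω = 1)
    (C2 : Ω → Submodule (ZMod 2) (Fin n → ZMod 2))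
    (hprob : ∀ x : Fin n → ZMod 2, x ∉ C1 →
      ∑ ω, (if x ∈ C2 ω then μ ω else 0) = ((2 : ℝ) ^ (l + t) - 2 ^ t) / (2 ^ n - 2 ^ t))
    (Γ : Ω → Finset (Fin n → ZMod 2))
    (hΓuniq : ∀ ω, μ ω ≠ 0 → ∀ y : Fin n → ZMod 2, ∃! γ, γ ∈ Γ ω ∧ y - γ ∈ C2 ω)
    (hΓmin : ∀ ω, μ ω ≠ 0 → ∀ γ ∈ Γ ω, ∀ y : Fin n → ZMod 2, y - γ ∈ C2 ω →
      hammingNorm γ ≤ hammingNorm y)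
    (y : Fin n → ZMod 2) :
    ∑ ω, μ ω * (if (∃ γ ∈ Γ ω, ∃ c ∈ C1, y = γ + c) then 0 else 1)
      ≤ g ((2 : ℝ) ^ (l + t) / 2 ^ n) n (hammingNorm y) := by
  set X : ℝ := (2:ℝ) ^ (l + t) / 2 ^ n with hX
  have hX0 : 0 ≤ X := by positivity
  set k := hammingNorm y with hk_def
  set F : ℝ := ∑ ω, μ ω * (if (∃ γ ∈ Γ ω, ∃ c ∈ C1, y = γ + c) then 0 else 1) with hF
  have hF1 : F ≤ 1 := by
    rw [hF]
    refine le_trans (Finset.sum_le_sum (fun ω _ => ?_)) hμ1.le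
    by_cases h : (∃ γ ∈ Γ ω, ∃ c ∈ C1, y = γ + c) <;> simp [h, hμ0 ω]
  -- main entropy-case bound
  have hC : 0 < n → 2 * k < n → F ≤ 2 ^ ((n:ℝ) * h2 ((k:ℝ) / n)) * X := by
    intro hn h2k
    set B := Finset.univ.filter
      (fun x : Fin n → ZMod 2 => x ∉ C1 ∧ hammingNorm (y - x) ≤ k) with hB
    have hstep : ∀ ω, μ ω * (if (∃ γ ∈ Γ ω, ∃ c ∈ C1, y = γ + c) then 0 else 1)
        ≤ ∑ x ∈ B, (if x ∈ C2 ω then μ ω else 0) := by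
      intro ω
      have hnn : ∀ x ∈ B, (0:ℝ) ≤ (if x ∈ C2 ω then μ ω else 0) := by
        intro x _; split <;> [exact hμ0 ω; exact le_rfl]
      by_cases hpred : (∃ γ ∈ Γ ω, ∃ c ∈ C1, y = γ + c)
      · simp only [hpred, if_true, mul_zero]
        exact Finset.sum_nonneg hnn
      · by_cases hμ : μ ω = 0
        · simp [hμ]
        · obtain ⟨γ, ⟨hγΓ, hγC⟩, -⟩ := hΓuniq ω hμ y
          have hxnot : y - γ ∉ C1 := by
            intro hmem
            exact hpred ⟨γ, hγΓ, y - γ, hmem, by abel⟩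
          have hnorm : hammingNorm (y - (y - γ)) ≤ k := by
            rw [sub_sub_cancel]
            exact hΓmin ω hμ γ hγΓ y hγC
          have hxB : y - γ ∈ B := by
            simp only [hB, Finset.mem_filter, Finset.mem_univ, true_and]
            exact ⟨hxnot, hnorm⟩
          calc μ ω * (if (∃ γ ∈ Γ ω, ∃ c ∈ C1, y = γ + c) then 0 else 1)
              = (if (y - γ) ∈ C2 ω then μ ω else 0) := by simp [hpred, hγC]
            _ ≤ ∑ x ∈ B, (if x ∈ C2 ω then μ ω else 0) :=
                Finset.single_le_sum hnn hxB
    have hFB : F ≤ (B.card : ℝ) * (((2:ℝ) ^ (l + t) - 2 ^ t) / (2 ^ n - 2 ^ t)) := by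
      calc F ≤ ∑ ω, ∑ x ∈ B, (if x ∈ C2 ω then μ ω else 0) := Finset.sum_le_sum (fun ω _ => hstep ω)
        _ = ∑ x ∈ B, ∑ ω, (if x ∈ C2 ω then μ ω else 0) := Finset.sum_comm
        _ = ∑ x ∈ B, (((2:ℝ) ^ (l + t) - 2 ^ t) / (2 ^ n - 2 ^ t)) := by
            apply Finset.sum_congr rfl
            intro x hx
            simp only [hB, Finset.mem_filter, Finset.mem_univ, true_and] at hx
            exact hprob x hx.1
        _ = (B.card : ℝ) * (((2:ℝ) ^ (l + t) - 2 ^ t) / (2 ^ n - 2 ^ t)) := by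
            rw [Finset.sum_const, nsmul_eq_mul]
    have hcard : (B.card : ℝ) ≤ 2 ^ ((n:ℝ) * h2 ((k:ℝ) / n)) := by
      have hsub : B ⊆ Finset.univ.filter
          (fun x : Fin n → ZMod 2 => hammingNorm (y - x) ≤ k) := by
        intro x hx
        simp only [hB, Finset.mem_filter, Finset.mem_univ, true_and] at hx ⊢
        exact hx.2
      have h1 : (B.card : ℝ)
          ≤ ((Finset.univ.filter (fun x : Fin n → ZMod 2 => hammingNorm x ≤ k)).card : ℝ) := by
        rw [← translate_ball_card n k y]
        exact_mod_cast Finset.card_le_card hsub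
      exact le_trans h1 (le_trans (ball_card_le_sum n k) (sum_choose_le_exp n k h2k))
    calc F ≤ (B.card : ℝ) * (((2:ℝ) ^ (l + t) - 2 ^ t) / (2 ^ n - 2 ^ t)) := hFB
      _ ≤ (B.card : ℝ) * X := by
          exact mul_le_mul_of_nonneg_left (q_le_X n t l htl) (by positivity)
      _ ≤ 2 ^ ((n:ℝ) * h2 ((k:ℝ) / n)) * X := mul_le_mul_of_nonneg_right hcard hX0
  -- dispatch on g
  rw [g]
  split_ifs with hk2
  · apply le_min _ hF1
    rw [hbar]
    split_ifs with hhalf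
    · rcases Nat.eq_zero_or_pos n with hn | hn
      · have hk0 : k = 0 := by omega
        have hl : l = 0 := by omega
        have ht : t = 0 := by omega
        subst hn; subst hl; subst ht
        rw [hk0]
        simp only [Nat.cast_zero, zero_mul, Real.rpow_zero, one_mul]
        simpa [hX] using hF1
      · have h2k : 2 * k < n := by
          have hnR : (0:ℝ) < n := by exact_mod_cast hn
          rw [div_lt_div_iff₀ hnR (by norm_num)] at hhalf
          have : (k:ℝ) * 2 < n := by linarith
          exact_mod_cast (by push_cast; linarith : (2 * k : ℝ) < n)
        exact hC hn h2k
    · calc F ≤ 1 := hF1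
        _ ≤ (2:ℝ) ^ (l + t) := one_le_pow₀ (by norm_num)
        _ = 2 ^ ((n:ℝ) * 1) * X := by
            rw [mul_one, Real.rpow_natCast, hX]
            field_simp
  · exact hF1


/-- Random-coding bound for minimum-Hamming-distance decoding: if the
`(t+l)`-dimensional code `C2 ⊇ C1` is chosen at random so that every `x ∉ C1` lies in `C2`
with probability `(2^{l+t}−2^t)/(2^n−2^t)`, and `Γ_{C2}` is a set of minimal-weight coset
representatives for `C2`, then for any distribution `P` on `F_2^n`,
`E[1 − P(Γ_{C2} + C1)] ≤ Σ_k P̃(k)·g(2^{l+t−n}|n,k)`. -/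
theorem stmt_0 (n t l : ℕ) (htl : t + l ≤ n)
    (C1 : Submodule (ZMod 2) (Fin n → ZMod 2))
    (hC1rk : Module.finrank (ZMod 2) C1 = t)
    (Ω : Type) [Fintype Ω] (μ : Ω → ℝ)
    (hμ0 : ∀ ω, 0 ≤ μ ω) (hμ1 : ∑ ω, μ ω = 1)
    (C2 : Ω → Submodule (ZMod 2) (Fin n → ZMod 2))
    (hC2le : ∀ ω, μ ω ≠ 0 → C1 ≤ C2 ω)
    (hC2rk : ∀ ω, μ ω ≠ 0 → Module.finrank (ZMod 2) (C2 ω) = t + l)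
    (hprob : ∀ x : Fin n → ZMod 2, x ∉ C1 →
      ∑ ω, (if x ∈ C2 ω then μ ω else 0) = ((2 : ℝ) ^ (l + t) - 2 ^ t) / (2 ^ n - 2 ^ t))
    (Γ : Ω → Finset (Fin n → ZMod 2))
    (hΓuniq : ∀ ω, μ ω ≠ 0 → ∀ y : Fin n → ZMod 2, ∃! γ, γ ∈ Γ ω ∧ y - γ ∈ C2 ω)
    (hΓmin : ∀ ω, μ ω ≠ 0 → ∀ γ ∈ Γ ω, ∀ y : Fin n → ZMod 2, y - γ ∈ C2 ω →
      hammingNorm γ ≤ hammingNorm y)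
    (P : (Fin n → ZMod 2) → ℝ) (hP0 : ∀ x, 0 ≤ P x) (hP1 : ∑ x, P x = 1) :
    ∑ ω, μ ω *
        (1 - ∑ y ∈ Finset.univ.filter
            (fun y : Fin n → ZMod 2 => ∃ γ ∈ Γ ω, ∃ c ∈ C1, y = γ + c), P y)
      ≤ ∑ k ∈ Finset.range (n + 1),
          (∑ x ∈ Finset.univ.filter (fun x : Fin n → ZMod 2 => hammingNorm x = k), P x) *
            g ((2 : ℝ) ^ (l + t) / 2 ^ n) n k := by
  set X : ℝ := (2:ℝ) ^ (l + t) / 2 ^ n with hX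
  -- Step 1: rewrite the LHS
  have hstep1 : ∀ ω, μ ω *
      (1 - ∑ y ∈ Finset.univ.filter
          (fun y : Fin n → ZMod 2 => ∃ γ ∈ Γ ω, ∃ c ∈ C1, y = γ + c), P y)
      = ∑ y : Fin n → ZMod 2,
          P y * (μ ω * (if (∃ γ ∈ Γ ω, ∃ c ∈ C1, y = γ + c) then 0 else 1)) := by
    intro ω
    have h1 : (1:ℝ) - ∑ y ∈ Finset.univ.filter
        (fun y : Fin n → ZMod 2 => ∃ γ ∈ Γ ω, ∃ c ∈ C1, y = γ + c), P y
        = ∑ y : Fin n → ZMod 2,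
            P y * (if (∃ γ ∈ Γ ω, ∃ c ∈ C1, y = γ + c) then 0 else 1) := by
      have hcalc : ∑ y : Fin n → ZMod 2,
          P y * (if (∃ γ ∈ Γ ω, ∃ c ∈ C1, y = γ + c) then 0 else 1)
          = (1:ℝ) - ∑ y ∈ Finset.univ.filter
              (fun y : Fin n → ZMod 2 => ∃ γ ∈ Γ ω, ∃ c ∈ C1, y = γ + c), P y := by
        calc ∑ y : Fin n → ZMod 2,
              P y * (if (∃ γ ∈ Γ ω, ∃ c ∈ C1, y = γ + c) then 0 else 1)
            = ∑ y : Fin n → ZMod 2,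
                (P y - if (∃ γ ∈ Γ ω, ∃ c ∈ C1, y = γ + c) then P y else 0) := by
              apply Finset.sum_congr rfl
              intro y _
              by_cases h : (∃ γ ∈ Γ ω, ∃ c ∈ C1, y = γ + c) <;> simp [h]
          _ = (∑ y : Fin n → ZMod 2, P y) - ∑ y : Fin n → ZMod 2,
                (if (∃ γ ∈ Γ ω, ∃ c ∈ C1, y = γ + c) then P y else 0) :=
              Finset.sum_sub_distrib ..
          _ = (1:ℝ) - ∑ y ∈ Finset.univ.filter
                (fun y : Fin n → ZMod 2 => ∃ γ ∈ Γ ω, ∃ c ∈ C1, y = γ + c), P y := by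
              rw [hP1, Finset.sum_filter]
      rw [hcalc]
    rw [h1, Finset.mul_sum]
    apply Finset.sum_congr rfl
    intro y _; ring
  -- Step 2: rewrite the RHS
  have hnorm_le : ∀ x : Fin n → ZMod 2, hammingNorm x ∈ Finset.range (n + 1) := by
    intro x
    have : hammingNorm x ≤ n := by
      simpa [hammingNorm] using Finset.card_filter_le (Finset.univ : Finset (Fin n)) (fun i => x i ≠ 0)
    simp [Nat.lt_succ_iff, this]
  have hRHS : ∑ k ∈ Finset.range (n + 1),
      (∑ x ∈ Finset.univ.filter (fun x : Fin n → ZMod 2 => hammingNorm x = k), P x) * g X n k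
      = ∑ x : Fin n → ZMod 2, P x * g X n (hammingNorm x) := by
    rw [← Finset.sum_fiberwise_of_maps_to (fun x _ => hnorm_le x)
      (fun x => P x * g X n (hammingNorm x))]
    apply Finset.sum_congr rfl
    intro k _
    rw [Finset.sum_mul]
    apply Finset.sum_congr rfl
    intro x hx
    have hxk : hammingNorm x = k := (Finset.mem_filter.1 hx).2
    rw [hxk]
  rw [hRHS]
  calc ∑ ω, μ ω *
        (1 - ∑ y ∈ Finset.univ.filter
            (fun y : Fin n → ZMod 2 => ∃ γ ∈ Γ ω, ∃ c ∈ C1, y = γ + c), P y)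
      = ∑ ω, ∑ y : Fin n → ZMod 2,
          P y * (μ ω * (if (∃ γ ∈ Γ ω, ∃ c ∈ C1, y = γ + c) then 0 else 1)) :=
        Finset.sum_congr rfl (fun ω _ => hstep1 ω)
    _ = ∑ y : Fin n → ZMod 2, ∑ ω,
          P y * (μ ω * (if (∃ γ ∈ Γ ω, ∃ c ∈ C1, y = γ + c) then 0 else 1)) :=
        Finset.sum_comm
    _ = ∑ y : Fin n → ZMod 2, P y *
          (∑ ω, μ ω * (if (∃ γ ∈ Γ ω, ∃ c ∈ C1, y = γ + c) then 0 else 1)) := by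
        apply Finset.sum_congr rfl
        intro y _
        rw [Finset.mul_sum]
    _ ≤ ∑ y : Fin n → ZMod 2, P y * g X n (hammingNorm y) := by
        apply Finset.sum_le_sum
        intro y _
        exact mul_le_mul_of_nonneg_left
          (pointwise_bound n t l htl C1 Ω μ hμ0 hμ1 C2 hprob Γ hΓuniq hΓmin y) (hP0 y)
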